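/- In the coordinate model of the RBB iteration with constant regularization parameter (τ_k = τ ≥ 0 for all k) and with λ_1 < λ_n, set θ = 1 − λ_1/λ_n and, for each i, C_i = max{ λ_i/λ_1 − 1, 1 − λ_i/λ_n }. Define constants F_1 = |e_1^0| and, recursively for 2 ≤ i ≤ n, F_i = max{ |e_i^0|, |e_i^1|/θ, θ^{-2}·C_i²·sqrt( Σ_{j=1}^{i-1} (λ_j²(1+τλ_j²))/(λ_i²(1+τλ_i²)) · F_j² ) }. Then for every k ≥ 1 and every i ∈ {1,…,n}: |e_i^k| ≤ θ^k · F_i; that is, each coordinate of the error converges to zero at least R-linearly with rate θ = 1 − 1/κ, where κ = λ_n/λ_1. -/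
import Mathlib


/-- R-linear convergence of the RBB coordinate iteration with constant
regularization parameter `τ_k = t ≥ 0` and `λ_1 < λ_n`. With `θ = 1 − λ_1/λ_n`,
`C_i = max{λ_i/λ_1 − 1, 1 − λ_i/λ_n}`, `F_1 = |e_1^0|` and, recursively,
`F_i = max{|e_i^0|, |e_i^1|/θ, θ⁻²C_i²√(Σ_{j<i} (λ_j²(1+tλ_j²))/(λ_i²(1+tλ_i²))·F_j²)}`
for `i ≥ 2`, every coordinate satisfies `|e_i^k| ≤ θ^k F_i` for all `k ≥ 1`. -/
theorem rbb_coordinate_rlinear_rate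
    (n : ℕ) (lam : Fin (n + 1) → ℝ) (hpos : 0 < lam 0) (hmono : Monotone lam)
    (hgap : lam 0 < lam (Fin.last n))
    (T : ℝ) (hT : 0 ≤ T)
    (e : ℕ → Fin (n + 1) → ℝ) (α τ : ℕ → ℝ)
    (hτ : ∀ k, 0 ≤ τ k ∧ τ k ≤ T)
    (t : ℝ) (ht : 0 ≤ t) (hconst : ∀ k, τ k = t)
    (hα0 : lam 0 ≤ α 0 ∧ α 0 ≤ lam (Fin.last n))
    (he : ∀ k, e k ≠ 0)
    (hrec : ∀ k i, e (k + 1) i = (1 - lam i / α k) * e k i)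
    (hα : ∀ k, α (k + 1) =
      (∑ i, lam i ^ 3 * (1 + τ k * lam i ^ 2) * e k i ^ 2) /
      (∑ i, lam i ^ 2 * (1 + τ k * lam i ^ 2) * e k i ^ 2))
    (θ : ℝ) (hθ : θ = 1 - lam 0 / lam (Fin.last n))
    (C : Fin (n + 1) → ℝ)
    (hC : ∀ i, C i = max (lam i / lam 0 - 1) (1 - lam i / lam (Fin.last n)))
    (F : Fin (n + 1) → ℝ)
    (hF0 : F 0 = |e 0 0|)
    (hFrec : ∀ i : Fin (n + 1), i ≠ 0 →
      F i = max (|e 0 i|) (max (|e 1 i| / θ)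
        ((θ ^ 2)⁻¹ * C i ^ 2 *
          Real.sqrt (∑ j ∈ Finset.univ.filter (fun j => j < i),
            (lam j ^ 2 * (1 + t * lam j ^ 2)) / (lam i ^ 2 * (1 + t * lam i ^ 2))
              * F j ^ 2)))) :
    ∀ k, 1 ≤ k → ∀ i : Fin (n + 1), |e k i| ≤ θ ^ k * F i := by
  classical
  have hl : ∀ i, 0 < lam i := fun i => lt_of_lt_of_le hpos (hmono (Fin.zero_le i))
  have hlamn : 0 < lam (Fin.last n) := hl _
  have hθpos : 0 < θ := by
    rw [hθ]
    have : lam 0 / lam (Fin.last n) < 1 := (div_lt_one hlamn).2 hgap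
    linarith
  have hθlt1 : θ < 1 := by
    rw [hθ]
    have : 0 < lam 0 / lam (Fin.last n) := div_pos hpos hlamn
    linarith
  simp only [hconst] at hα
  have hw : ∀ i : Fin (n + 1), 0 < 1 + t * lam i ^ 2 := by
    intro i
    have : 0 ≤ t * lam i ^ 2 := mul_nonneg ht (sq_nonneg _)
    linarith
  -- the weights q m j
  set q : ℕ → Fin (n + 1) → ℝ := fun m j => lam j ^ 2 * (1 + t * lam j ^ 2) * e m j ^ 2
    with hq
  have hqnn : ∀ m j, 0 ≤ q m j := fun m j =>
    mul_nonneg (mul_nonneg (sq_nonneg _) (hw j).le) (sq_nonneg _)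
  have hqpos : ∀ m j, e m j ≠ 0 → 0 < q m j := fun m j h =>
    mul_pos (mul_pos (pow_pos (hl j) 2) (hw j))
      (lt_of_le_of_ne (sq_nonneg _) (Ne.symm (pow_ne_zero 2 h)))
  have hD : ∀ m, 0 < ∑ j, q m j := by
    intro m
    obtain ⟨i, hi⟩ := Function.ne_iff.1 (he m)
    exact Finset.sum_pos' (fun j _ => hqnn m j) ⟨i, Finset.mem_univ i, hqpos m i hi⟩
  -- numerator and denominator rewrites
  have hnum : ∀ m, (∑ i, lam i ^ 3 * (1 + t * lam i ^ 2) * e m i ^ 2) = ∑ j, lam j * q m j := by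
    intro m
    refine Finset.sum_congr rfl fun j _ => by rw [hq]; ring
  have hden : ∀ m, (∑ i, lam i ^ 2 * (1 + t * lam i ^ 2) * e m i ^ 2) = ∑ j, q m j := by
    intro m
    refine Finset.sum_congr rfl fun j _ => rfl
  have hNlb : ∀ m, lam 0 * ∑ j, q m j ≤ ∑ j, lam j * q m j := by
    intro m
    rw [Finset.mul_sum]
    exact Finset.sum_le_sum fun j _ =>
      mul_le_mul_of_nonneg_right (hmono (Fin.zero_le j)) (hqnn m j)
  have hNub : ∀ m, (∑ j, lam j * q m j) ≤ lam (Fin.last n) * ∑ j, q m j := by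
    intro m
    rw [Finset.mul_sum]
    exact Finset.sum_le_sum fun j _ =>
      mul_le_mul_of_nonneg_right (hmono (Fin.le_last j)) (hqnn m j)
  -- α stays in [lam 0, lam last]
  have hαb : ∀ k, lam 0 ≤ α k ∧ α k ≤ lam (Fin.last n) := by
    intro k
    cases k with
    | zero => exact hα0
    | succ m =>
      rw [hα m, hnum m, hden m]
      constructor
      · rw [le_div_iff₀ (hD m)]
        exact hNlb m
      · rw [div_le_iff₀ (hD m)]
        exact hNub m
  have hαpos : ∀ k, 0 < α k := fun k => lt_of_lt_of_le hpos (hαb k).1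
  -- always |1 - lam i / α k| ≤ C i
  have hCnn : ∀ i, 0 ≤ C i := by
    intro i
    rw [hC i]
    have : (1:ℝ) ≤ lam i / lam 0 := (one_le_div hpos).2 (hmono (Fin.zero_le i))
    exact le_trans (by linarith) (le_max_left _ _)
  have habsC : ∀ k i, |1 - lam i / α k| ≤ C i := by
    intro k i
    rw [hC i, abs_le]
    constructor
    · have h1 : lam i / α k ≤ lam i / lam 0 :=
        div_le_div_of_nonneg_left (hl i).le hpos (hαb k).1
      have := le_max_left (lam i / lam 0 - 1) (1 - lam i / lam (Fin.last n))
      linarith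
    · have h1 : lam i / lam (Fin.last n) ≤ lam i / α k :=
        div_le_div_of_nonneg_left (hl i).le (hαpos k) (hαb k).2
      have := le_max_right (lam i / lam 0 - 1) (1 - lam i / lam (Fin.last n))
      linarith
  -- always 1 - lam i / α k ≤ θ
  have hub : ∀ k i, 1 - lam i / α k ≤ θ := by
    intro k i
    rw [hθ]
    have h1 : lam i / lam (Fin.last n) ≤ lam i / α k :=
      div_le_div_of_nonneg_left (hl i).le (hαpos k) (hαb k).2
    have h2 : lam 0 / lam (Fin.last n) ≤ lam i / lam (Fin.last n) := by
      gcongr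
      exact hmono (Fin.zero_le i)
    linarith
  -- coordinate 0 always contracts
  have h0abs : ∀ k, |1 - lam 0 / α k| ≤ θ := by
    intro k
    have h1 : lam 0 / α k ≤ 1 := (div_le_one (hαpos k)).2 (hαb k).1
    rw [abs_of_nonneg (by linarith)]
    exact hub k 0
  have hFe0 : ∀ i, |e 0 i| ≤ F i := by
    intro i
    by_cases h : i = 0
    · subst h; rw [hF0]
    · rw [hFrec i h]; exact le_max_left _ _
  have hFnn : ∀ i, 0 ≤ F i := fun i => le_trans (abs_nonneg _) (hFe0 i)
  -- step lemma: if all smaller coordinates satisfy the bound, so does i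
  have step : ∀ i : Fin (n + 1),
      (∀ j, j < i → ∀ k, 1 ≤ k → |e k j| ≤ θ ^ k * F j) →
      ∀ k, 1 ≤ k → |e k i| ≤ θ ^ k * F i := by
    intro i IH
    have IH' : ∀ m, ∀ j, j < i → |e m j| ≤ θ ^ m * F j := by
      intro m j hj
      cases m with
      | zero => simpa using hFe0 j
      | succ m' => exact IH j hj (m' + 1) (Nat.succ_le_succ (Nat.zero_le _))
    refine Nat.le_induction ?_ ?_
    · -- base k = 1
      by_cases h : i = 0
      · subst h
        rw [pow_one, hF0, hrec 0 0, abs_mul]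
        exact mul_le_mul_of_nonneg_right (h0abs 0) (abs_nonneg _)
      · have hFi : |e 1 i| / θ ≤ F i := by
          rw [hFrec i h]
          exact le_trans (le_max_left _ _) (le_max_right _ _)
        calc |e 1 i| = θ * (|e 1 i| / θ) := by field_simp
          _ ≤ θ * F i := mul_le_mul_of_nonneg_left hFi hθpos.le
          _ = θ ^ 1 * F i := by rw [pow_one]
    · -- step k → k + 1, k ≥ 1
      intro k hk IHk
      by_cases hcase : |1 - lam i / α k| ≤ θ
      · rw [hrec k i, abs_mul]
        calc |1 - lam i / α k| * |e k i| ≤ θ * (θ ^ k * F i) :=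
              mul_le_mul hcase IHk (abs_nonneg _) hθpos.le
          _ = θ ^ (k + 1) * F i := by rw [pow_succ]; ring
      · push_neg at hcase
        have hine : i ≠ 0 := by
          rintro rfl
          exact absurd (h0abs k) (not_le.2 hcase)
        obtain ⟨m, rfl⟩ : ∃ m, k = m + 1 := ⟨k - 1, (Nat.succ_pred_eq_of_pos hk).symm⟩
        have hxneg : 1 - lam i / α (m + 1) < 0 := by
          by_contra hcon
          push_neg at hcon
          rw [abs_of_nonneg hcon] at hcase
          exact absurd (hub (m + 1) i) (not_le.2 hcase)
        have hxabs : |1 - lam i / α (m + 1)| = lam i / α (m + 1) - 1 := by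
          rw [abs_of_neg hxneg]; ring
        have hxθ : θ < lam i / α (m + 1) - 1 := hxabs ▸ hcase
        have hxpos : 0 < lam i / α (m + 1) - 1 := lt_trans hθpos hxθ
        by_cases hem : e m i = 0
        · have h1 : e (m + 1) i = 0 := by rw [hrec m i, hem, mul_zero]
          have h2 : e (m + 1 + 1) i = 0 := by rw [hrec (m + 1) i, h1, mul_zero]
          rw [h2, abs_zero]
          exact mul_nonneg (pow_nonneg hθpos.le _) (hFnn i)
        · -- main bad case
          have hqi : 0 < q m i := hqpos m i hem
          have hDm := hD m
          have hSnn : 0 ≤ ∑ j ∈ Finset.univ.filter (fun j => j < i), q m j :=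
            Finset.sum_nonneg fun j _ => hqnn m j
          have hLpos : 0 < lam i ^ 2 * (1 + t * lam i ^ 2) :=
            mul_pos (pow_pos (hl i) 2) (hw i)
          -- key bound on lam i / α (m+1) - 1
          have hkey : lam i / α (m + 1) - 1 ≤
              (lam i - lam 0) * (∑ j ∈ Finset.univ.filter (fun j => j < i), q m j)
                / (lam 0 * ∑ j, q m j) := by
            rw [hα m, hnum m, hden m]
            have hNpos : 0 < ∑ j, lam j * q m j :=
              lt_of_lt_of_le (mul_pos hpos hDm) (hNlb m)
            have h1 : lam i / ((∑ j, lam j * q m j) / (∑ j, q m j)) - 1 =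
                (lam i * (∑ j, q m j) - ∑ j, lam j * q m j) / (∑ j, lam j * q m j) := by
              field_simp
            rw [h1]
            have h2 : lam i * (∑ j, q m j) - (∑ j, lam j * q m j) ≤
                (lam i - lam 0) * (∑ j ∈ Finset.univ.filter (fun j => j < i), q m j) := by
              have h3 : lam i * (∑ j, q m j) - (∑ j, lam j * q m j) =
                  ∑ j, (lam i - lam j) * q m j := by
                rw [Finset.mul_sum, ← Finset.sum_sub_distrib]
                exact Finset.sum_congr rfl fun j _ => by ring
              rw [h3, ← Finset.sum_filter_add_sum_filter_not Finset.univ (fun j => j < i)]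
              have h4 : ∑ j ∈ Finset.univ.filter (fun j => ¬ j < i),
                  (lam i - lam j) * q m j ≤ 0 :=
                Finset.sum_nonpos fun j hj => mul_nonpos_of_nonpos_of_nonneg
                  (sub_nonpos.2 (hmono (le_of_not_gt (Finset.mem_filter.1 hj).2)))
                  (hqnn m j)
              have h5 : ∑ j ∈ Finset.univ.filter (fun j => j < i), (lam i - lam j) * q m j
                  ≤ (lam i - lam 0) * (∑ j ∈ Finset.univ.filter (fun j => j < i), q m j) := by
                rw [Finset.mul_sum]
                refine Finset.sum_le_sum fun j _ => mul_le_mul_of_nonneg_right ?_ (hqnn m j)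
                have := hmono (Fin.zero_le j)
                linarith
              linarith
            exact div_le_div₀ (mul_nonneg (by have := hmono (Fin.zero_le i); linarith) hSnn)
              h2 (mul_pos hpos hDm) (hNlb m)
          -- the two elementary bounds on |e (m+2) i|
          have hBnd1 : |e (m + 1 + 1) i| ≤
              (lam i / α (m + 1) - 1) * (C i * |e m i|) := by
            rw [hrec (m + 1) i, abs_mul, hxabs]
            refine mul_le_mul_of_nonneg_left ?_ hxpos.le
            rw [hrec m i, abs_mul]
            exact mul_le_mul_of_nonneg_right (habsC m i) (abs_nonneg _)
          have hBnd2 : |e (m + 1 + 1) i| ≤ C i * (C i * |e m i|) := by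
            rw [hrec (m + 1) i, abs_mul, hrec m i, abs_mul]
            exact mul_le_mul (habsC (m + 1) i)
              (mul_le_mul_of_nonneg_right (habsC m i) (abs_nonneg _))
              (mul_nonneg (abs_nonneg _) (abs_nonneg _))
              (hCnn i)
          -- square bound
          have hSq : |e (m + 1 + 1) i| ^ 2 ≤
              C i ^ 3 * ((lam i / α (m + 1) - 1) * (e m i) ^ 2) := by
            have h6 : |e (m + 1 + 1) i| ^ 2 ≤
                (C i * (C i * |e m i|)) * ((lam i / α (m + 1) - 1) * (C i * |e m i|)) := by
              rw [sq]
              exact mul_le_mul hBnd2 hBnd1 (abs_nonneg _)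
                (mul_nonneg (hCnn i) (mul_nonneg (hCnn i) (abs_nonneg _)))
            calc |e (m + 1 + 1) i| ^ 2 ≤ _ := h6
              _ = C i ^ 3 * ((lam i / α (m + 1) - 1) * |e m i| ^ 2) := by ring
              _ = C i ^ 3 * ((lam i / α (m + 1) - 1) * (e m i) ^ 2) := by rw [sq_abs]
          -- bound (x) * (e m i)^2 by C i * (S / L)
          have hxe : (lam i / α (m + 1) - 1) * (e m i) ^ 2 ≤
              C i * ((∑ j ∈ Finset.univ.filter (fun j => j < i), q m j)
                / (lam i ^ 2 * (1 + t * lam i ^ 2))) := by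
            have h6 : (e m i) ^ 2 / (∑ j, q m j) ≤ 1 / (lam i ^ 2 * (1 + t * lam i ^ 2)) := by
              rw [div_le_div_iff₀ hDm hLpos]
              have h7 : q m i ≤ ∑ j, q m j :=
                Finset.single_le_sum (fun j _ => hqnn m j) (Finset.mem_univ i)
              have h8 : q m i = lam i ^ 2 * (1 + t * lam i ^ 2) * (e m i) ^ 2 := rfl
              nlinarith [h7, h8]
            have hCi' : (lam i - lam 0) / lam 0 ≤ C i := by
              rw [hC i]
              refine le_trans (le_of_eq ?_) (le_max_left _ _)
              field_simp
            calc (lam i / α (m + 1) - 1) * (e m i) ^ 2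
                ≤ ((lam i - lam 0) * (∑ j ∈ Finset.univ.filter (fun j => j < i), q m j)
                    / (lam 0 * ∑ j, q m j)) * (e m i) ^ 2 :=
                  mul_le_mul_of_nonneg_right hkey (sq_nonneg _)
              _ = ((lam i - lam 0) / lam 0 *
                    (∑ j ∈ Finset.univ.filter (fun j => j < i), q m j)) *
                    ((e m i) ^ 2 / (∑ j, q m j)) := by
                  field_simp
              _ ≤ (C i * (∑ j ∈ Finset.univ.filter (fun j => j < i), q m j)) *
                    (1 / (lam i ^ 2 * (1 + t * lam i ^ 2))) := by
                  refine mul_le_mul (mul_le_mul_of_nonneg_right hCi' hSnn) h6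
                    (div_nonneg (sq_nonneg _) hDm.le) (mul_nonneg (hCnn i) hSnn)
              _ = C i * ((∑ j ∈ Finset.univ.filter (fun j => j < i), q m j)
                    / (lam i ^ 2 * (1 + t * lam i ^ 2))) := by ring
          -- bound S / L using the induction hypothesis at time m
          have hSL : (∑ j ∈ Finset.univ.filter (fun j => j < i), q m j)
                / (lam i ^ 2 * (1 + t * lam i ^ 2)) ≤
              (θ ^ m) ^ 2 * ∑ j ∈ Finset.univ.filter (fun j => j < i),
                (lam j ^ 2 * (1 + t * lam j ^ 2)) / (lam i ^ 2 * (1 + t * lam i ^ 2))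
                  * F j ^ 2 := by
            rw [Finset.sum_div, Finset.mul_sum]
            refine Finset.sum_le_sum fun j hj => ?_
            have hmj : (e m j) ^ 2 ≤ (θ ^ m * F j) ^ 2 := by
              have h9 := IH' m j (Finset.mem_filter.1 hj).2
              have h10 := pow_le_pow_left₀ (abs_nonneg (e m j)) h9 2
              rwa [sq_abs] at h10
            have hrat : 0 ≤ lam j ^ 2 * (1 + t * lam j ^ 2)
                / (lam i ^ 2 * (1 + t * lam i ^ 2)) :=
              div_nonneg (mul_nonneg (sq_nonneg _) (hw j).le) hLpos.le
            calc q m j / (lam i ^ 2 * (1 + t * lam i ^ 2))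
                = lam j ^ 2 * (1 + t * lam j ^ 2) / (lam i ^ 2 * (1 + t * lam i ^ 2))
                    * (e m j) ^ 2 := by rw [hq]; ring
              _ ≤ lam j ^ 2 * (1 + t * lam j ^ 2) / (lam i ^ 2 * (1 + t * lam i ^ 2))
                    * (θ ^ m * F j) ^ 2 := mul_le_mul_of_nonneg_left hmj hrat
              _ = (θ ^ m) ^ 2 * (lam j ^ 2 * (1 + t * lam j ^ 2)
                    / (lam i ^ 2 * (1 + t * lam i ^ 2)) * F j ^ 2) := by ring
          -- put everything together
          set Sig := ∑ j ∈ Finset.univ.filter (fun j => j < i),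
              (lam j ^ 2 * (1 + t * lam j ^ 2)) / (lam i ^ 2 * (1 + t * lam i ^ 2))
                * F j ^ 2 with hSig
          have hSignn : 0 ≤ Sig := by
            rw [hSig]
            refine Finset.sum_nonneg fun j _ => mul_nonneg
              (div_nonneg (mul_nonneg (sq_nonneg _) (hw j).le) hLpos.le) (sq_nonneg _)
          have hMi : Real.sqrt Sig ^ 2 = Sig := Real.sq_sqrt hSignn
          have hA2 : |e (m + 1 + 1) i| ^ 2 ≤ (C i ^ 2 * θ ^ m * Real.sqrt Sig) ^ 2 := by
            calc |e (m + 1 + 1) i| ^ 2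
                ≤ C i ^ 3 * ((lam i / α (m + 1) - 1) * (e m i) ^ 2) := hSq
              _ ≤ C i ^ 3 * (C i * ((∑ j ∈ Finset.univ.filter (fun j => j < i), q m j)
                    / (lam i ^ 2 * (1 + t * lam i ^ 2)))) :=
                  mul_le_mul_of_nonneg_left hxe (pow_nonneg (hCnn i) 3)
              _ ≤ C i ^ 3 * (C i * ((θ ^ m) ^ 2 * Sig)) := by
                  refine mul_le_mul_of_nonneg_left
                    (mul_le_mul_of_nonneg_left hSL (hCnn i)) (pow_nonneg (hCnn i) 3)
              _ = (C i ^ 2 * θ ^ m * Real.sqrt Sig) ^ 2 := by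
                  rw [mul_pow, mul_pow, hMi]; ring
          have hA : |e (m + 1 + 1) i| ≤ C i ^ 2 * θ ^ m * Real.sqrt Sig := by
            have h11 := Real.sqrt_le_sqrt hA2
            rwa [Real.sqrt_sq (abs_nonneg _), Real.sqrt_sq
              (mul_nonneg (mul_nonneg (pow_nonneg (hCnn i) 2) (pow_nonneg hθpos.le m))
                (Real.sqrt_nonneg _))] at h11
          have hFi3 : (θ ^ 2)⁻¹ * C i ^ 2 * Real.sqrt Sig ≤ F i := by
            rw [hFrec i hine, ← hSig]
            exact le_trans (le_max_right _ _) (le_max_right _ _)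
          calc |e (m + 1 + 1) i| ≤ C i ^ 2 * θ ^ m * Real.sqrt Sig := hA
            _ = θ ^ (m + 1 + 1) * ((θ ^ 2)⁻¹ * C i ^ 2 * Real.sqrt Sig) := by
                have hθne : θ ≠ 0 := ne_of_gt hθpos
                field_simp
                ring
            _ ≤ θ ^ (m + 1 + 1) * F i :=
                mul_le_mul_of_nonneg_left hFi3 (pow_nonneg hθpos.le _)
  -- wrap up with strong induction on i via its value
  have main : ∀ N : ℕ, ∀ i : Fin (n + 1), (i : ℕ) ≤ N →
      ∀ k, 1 ≤ k → |e k i| ≤ θ ^ k * F i := by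
    intro N
    induction N with
    | zero =>
      intro i hi
      refine step i fun j hj => ?_
      exact absurd (lt_of_lt_of_le hj (Fin.le_def.2 (by omega))) (lt_irrefl _)
    | succ N ihN =>
      intro i hi
      refine step i fun j hj => ?_
      exact ihN j (by have := Fin.lt_def.1 hj; omega)
  exact fun k hk i => main n i (Nat.lt_succ_iff.1 i.isLt) k hk
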